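/- Let A and H be hearts of bounded t-structures on a triangulated category T, and suppose A is a length category with finitely many simple objects. Then there exist integers a ≤ b such that every object of H has A-cohomology concentrated in degrees [a,b] (i.e. H ∈ [a,b]_A). -/

import Mathlib

open CategoryTheory Limits Pretriangulated Triangulated

namespace TSt

variable {C : Type*} [Category C] [Preadditive C] [HasZeroObject C] [HasShift C ℤ]
  [∀ (n : ℤ), (shiftFunctor C n).Additive] [Pretriangulated C]

/-- The truncation `τ_{≤ n} A` with respect to a t-structure, defined (up to isomorphism)
by the triangle `τ_{≤n} A → A → τ_{≥ n+1} A → `. -/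
noncomputable def truncLEObj (t : TStructure C) (n : ℤ) (A : C) : C :=
  (t.exists_triangle A n (n + 1) rfl).choose

/-- The truncation `τ_{≥ n} A` with respect to a t-structure. -/
noncomputable def truncGEObj (t : TStructure C) (n : ℤ) (A : C) : C :=
  (t.exists_triangle A (n - 1) n (by omega)).choose_spec.choose

/-- The `n`-th cohomology object of `A` with respect to the t-structure `t`:
`H^n(A) = (τ_{≥ n} τ_{≤ n} A)⟦n⟧`, an object of the heart. -/
noncomputable def cohObj (t : TStructure C) (n : ℤ) (A : C) : C :=
  (truncGEObj t n (truncLEObj t n A))⟦n⟧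

/-- Membership in the heart of a t-structure. -/
def InHeart (t : TStructure C) (A : C) : Prop := t.le 0 A ∧ t.ge 0 A

/-- A t-structure is bounded if every object is bounded above and below for it. -/
def IsBoundedTStructure (t : TStructure C) : Prop :=
  ∀ X : C, ∃ a b : ℤ, t.ge a X ∧ t.le b X

/-- `x ∈ [a,b]_t` : the cohomology of `x` with respect to `t` vanishes outside `[a,b]`. -/
def MemIcc (t : TStructure C) (a b : ℤ) (x : C) : Prop :=
  ∀ i : ℤ, (i < a ∨ b < i) → IsZero (cohObj t i x)

/-- `x ∈ [[a,b]]_t` : cohomology concentrated in `[a,b]`, nonzero at both endpoints. -/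
def MemIccStrict (t : TStructure C) (a b : ℤ) (x : C) : Prop :=
  MemIcc t a b x ∧ ¬ IsZero (cohObj t a x) ∧ ¬ IsZero (cohObj t b x)


/-- The extension closure of a class of objects in a pretriangulated category:
the smallest class containing the given objects and zero objects, and closed under
extensions (distinguished triangles). -/
inductive ExtClosure (P : C → Prop) : C → Prop
  | of {x : C} (h : P x) : ExtClosure P x
  | zero {x : C} (h : IsZero x) : ExtClosure P x
  | ext {x y z : C} (f : x ⟶ y) (g : y ⟶ z) (w : z ⟶ x⟦(1 : ℤ)⟧)
      (hT : Triangle.mk f g w ∈ distTriang C)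
      (hx : ExtClosure P x) (hz : ExtClosure P z) : ExtClosure P y

section Helpers

variable (t : TStructure C)

lemma zeroHom {a b : ℤ} (hab : a < b) {X Y : C} (f : X ⟶ Y)
    (hX : t.le a X) (hY : t.ge b Y) : f = 0 := by
  have h1 : t.le 0 (X⟦a⟧) := t.le_shift a a 0 (by omega) X hX
  have h2 : t.ge (b - a) (Y⟦a⟧) := t.ge_shift b a (b - a) (by omega) Y hY
  have h3 : t.ge 1 (Y⟦a⟧) := t.ge_antitone (by omega) _ h2
  have h4 : (shiftFunctor C a).map f = 0 := t.zero' _ h1 h3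
  exact (shiftFunctor C a).map_eq_zero_iff.1 h4

lemma isZero_shift {X : C} (h : IsZero X) (n : ℤ) : IsZero (X⟦n⟧) :=
  (shiftFunctor C n).map_isZero h

lemma isZero₃' {T : Triangle C} (hT : T ∈ distTriang C) (h : T.mor₂ = 0)
    (horth : ∀ φ : T.obj₁⟦(1:ℤ)⟧ ⟶ T.obj₃, φ = 0) : IsZero T.obj₃ := by
  obtain ⟨g, hg⟩ := Triangle.yoneda_exact₃ T hT (𝟙 T.obj₃) (by simp [h])
  rw [IsZero.iff_id_eq_zero, hg, horth g, comp_zero]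

lemma isZero₁' {T : Triangle C} (hT : T ∈ distTriang C) (h : T.mor₁ = 0)
    (horth : ∀ φ : T.obj₁⟦(1:ℤ)⟧ ⟶ T.obj₃, φ = 0) : IsZero T.obj₁ := by
  obtain ⟨g, hg⟩ := Triangle.coyoneda_exact₁ T hT (𝟙 (T.obj₁⟦(1:ℤ)⟧))
    (by rw [h, Functor.map_zero, comp_zero])
  have hz : IsZero (T.obj₁⟦(1:ℤ)⟧) := by
    rw [IsZero.iff_id_eq_zero, hg, horth g, zero_comp]
  exact IsZero.of_iso (isZero_shift hz (-1)) ((shiftEquiv C (1:ℤ)).unitIso.app T.obj₁)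

lemma truncLE_spec (n : ℤ) (A : C) :
    ∃ (G : C) (_ : t.le n (truncLEObj t n A)) (_ : t.ge (n+1) G)
      (f : truncLEObj t n A ⟶ A) (g : A ⟶ G) (w : G ⟶ (truncLEObj t n A)⟦(1:ℤ)⟧),
      Triangle.mk f g w ∈ distTriang C :=
  (t.exists_triangle A n (n+1) rfl).choose_spec

lemma truncGE_spec (n : ℤ) (A : C) :
    ∃ (L : C) (_ : t.le (n-1) L) (_ : t.ge n (truncGEObj t n A))
      (f : L ⟶ A) (g : A ⟶ truncGEObj t n A) (w : truncGEObj t n A ⟶ L⟦(1:ℤ)⟧),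
      Triangle.mk f g w ∈ distTriang C := by
  obtain ⟨hL, hY, f, g, w, mem⟩ :=
    (t.exists_triangle A (n-1) n (by omega)).choose_spec.choose_spec
  exact ⟨_, hL, hY, f, g, w, mem⟩

lemma le_of_isZero {X : C} (h : IsZero X) (n : ℤ) : t.le n X := by
  obtain ⟨G, hL, hG, f, g, w, mem⟩ := truncLE_spec t n X
  have hg : g = 0 := h.eq_of_src g 0
  have hGz : IsZero G := isZero₃' mem hg
    (fun φ => zeroHom t (show n - 1 < n + 1 by omega) φ
      (t.le_shift n 1 (n-1) (by omega) _ hL) hG)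
  have : IsIso f := (Triangle.isZero₃_iff_isIso₁ _ mem).1 hGz
  exact ObjectProperty.prop_of_iso (t.le n) (asIso f) hL

lemma ge_of_isZero {X : C} (h : IsZero X) (n : ℤ) : t.ge n X := by
  obtain ⟨L, hL, hG, f, g, w, mem⟩ := truncGE_spec t n X
  have hf : f = 0 := h.eq_of_tgt f 0
  have hLz : IsZero L := isZero₁' mem hf
    (fun φ => zeroHom t (show n - 1 - 1 < n by omega) φ
      (t.le_shift (n-1) 1 (n-1-1) (by omega) _ hL) hG)
  have : IsIso g := (Triangle.isZero₁_iff_isIso₂ _ mem).1 hLz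
  exact ObjectProperty.prop_of_iso (t.ge n) (asIso g).symm hG

lemma le_ext₂ {T : Triangle C} (hT : T ∈ distTriang C) (n : ℤ)
    (h₁ : t.le n T.obj₁) (h₃ : t.le n T.obj₃) : t.le n T.obj₂ := by
  obtain ⟨G, hL, hG, f, g, w, mem⟩ := truncLE_spec t n T.obj₂
  have h0 : T.mor₁ ≫ g = 0 := zeroHom t (show n < n + 1 by omega) _ h₁ hG
  obtain ⟨φ, hφ⟩ := Triangle.yoneda_exact₂ T hT g h0
  have hφ0 : φ = 0 := zeroHom t (show n < n + 1 by omega) φ h₃ hG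
  have hg : g = 0 := by rw [hφ, hφ0, comp_zero]
  have hGz : IsZero G := isZero₃' mem hg
    (fun ψ => zeroHom t (show n - 1 < n + 1 by omega) ψ
      (t.le_shift n 1 (n-1) (by omega) _ hL) hG)
  have : IsIso f := (Triangle.isZero₃_iff_isIso₁ _ mem).1 hGz
  exact ObjectProperty.prop_of_iso (t.le n) (asIso f) hL

lemma ge_ext₂ {T : Triangle C} (hT : T ∈ distTriang C) (n : ℤ)
    (h₁ : t.ge n T.obj₁) (h₃ : t.ge n T.obj₃) : t.ge n T.obj₂ := by
  obtain ⟨L, hL, hG, f, g, w, mem⟩ := truncGE_spec t n T.obj₂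
  have h0 : f ≫ T.mor₂ = 0 := zeroHom t (show n - 1 < n by omega) _ hL h₃
  obtain ⟨φ, hφ⟩ := Triangle.coyoneda_exact₂ T hT f h0
  have hφ0 : φ = 0 := zeroHom t (show n - 1 < n by omega) φ hL h₁
  have hf : f = 0 := by rw [hφ, hφ0, zero_comp]
  have hLz : IsZero L := isZero₁' mem hf
    (fun ψ => zeroHom t (show n - 1 - 1 < n by omega) ψ
      (t.le_shift (n-1) 1 (n-1-1) (by omega) _ hL) hG)
  have : IsIso g := (Triangle.isZero₁_iff_isIso₂ _ mem).1 hLz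
  exact ObjectProperty.prop_of_iso (t.ge n) (asIso g).symm hG

lemma extClosure_le (n : ℤ) {P : C → Prop} (hP : ∀ z, P z → t.le n z)
    {x : C} (hx : ExtClosure P x) : t.le n x := by
  induction hx with
  | of h => exact hP _ h
  | zero h => exact le_of_isZero t h n
  | ext f g w hT hx hz ihx ihz => exact le_ext₂ t hT n ihx ihz

lemma extClosure_ge (n : ℤ) {P : C → Prop} (hP : ∀ z, P z → t.ge n z)
    {x : C} (hx : ExtClosure P x) : t.ge n x := by
  induction hx with
  | of h => exact hP _ h
  | zero h => exact ge_of_isZero t h n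
  | ext f g w hT hx hz ihx ihz => exact ge_ext₂ t hT n ihx ihz

lemma isZero_truncGEObj (n : ℤ) {A : C} (hA : IsZero A) :
    IsZero (truncGEObj t n A) := by
  obtain ⟨L, hL, hG, f, g, w, mem⟩ := truncGE_spec t n A
  exact isZero₃' mem (hA.eq_of_src g 0)
    (fun φ => zeroHom t (show n - 1 - 1 < n by omega) φ
      (t.le_shift (n-1) 1 (n-1-1) (by omega) _ hL) hG)

lemma memIcc_of_ge_le {a b : ℤ} {x : C} (ha : t.ge a x) (hb : t.le b x) :
    MemIcc t a b x := by
  intro i hi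
  obtain ⟨G, hL, hG, f, g, w, mem⟩ := truncLE_spec t i x
  rcases hi with hi | hi
  · have hf : f = 0 := zeroHom t hi f hL ha
    have hLz : IsZero (truncLEObj t i x) := isZero₁' mem hf
      (fun φ => zeroHom t (show i - 1 < i + 1 by omega) φ
        (t.le_shift i 1 (i-1) (by omega) _ hL) hG)
    exact isZero_shift (isZero_truncGEObj t i hLz) i
  · have hg : g = 0 := zeroHom t (show b < i + 1 by omega) g hb hG
    have hGz : IsZero G := isZero₃' mem hg
      (fun φ => zeroHom t (show i - 1 < i + 1 by omega) φ
        (t.le_shift i 1 (i-1) (by omega) _ hL) hG)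
    have : IsIso f := (Triangle.isZero₃_iff_isIso₁ _ mem).1 hGz
    have hLb : t.le b (truncLEObj t i x) := ObjectProperty.prop_of_iso (t.le b) (asIso f).symm hb
    obtain ⟨L₂, hL₂, hG₂, f₂, g₂, w₂, mem₂⟩ := truncGE_spec t i (truncLEObj t i x)
    have hg₂ : g₂ = 0 := zeroHom t hi g₂ hLb hG₂
    have hz : IsZero (truncGEObj t i (truncLEObj t i x)) := isZero₃' mem₂ hg₂
      (fun φ => zeroHom t (show i - 1 - 1 < i by omega) φ
        (t.le_shift (i-1) 1 (i-1-1) (by omega) _ hL₂) hG₂)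
    exact isZero_shift hz i

end Helpers

/-- If the heart `A` of a bounded t-structure `t₁` is a length category
with finitely many simples (every object of `A` is a finite iterated extension of a
finite family of objects of `A`), and `H` is the heart of any bounded t-structure `t₂`,
then there exist `a ≤ b` with `H ∈ [a,b]_A`. -/
theorem heart_bounded_with_respect_to_length_heart
    (t₁ t₂ : TStructure C) (ht₁ : IsBoundedTStructure t₁) (ht₂ : IsBoundedTStructure t₂)
    (ι : Type) (hι : Finite ι) (S : ι → C) (hS : ∀ i, InHeart t₁ (S i))
    (hlength : ∀ x : C, InHeart t₁ x → ExtClosure (fun z => ∃ i, z = S i) x) :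
    ∃ a b : ℤ, a ≤ b ∧ ∀ x : C, InHeart t₂ x → MemIcc t₁ a b x := by
  classical
  have : Fintype ι := Fintype.ofFinite ι
  choose ca cb hca hcb using fun i => ht₂ (S i)
  set Fc : Finset ℤ := insert 0 (Finset.univ.image ca) with hFcdef
  have hFc : Fc.Nonempty := ⟨0, Finset.mem_insert_self _ _⟩
  set Fd : Finset ℤ := insert 0 (Finset.univ.image cb) with hFddef
  have hFd : Fd.Nonempty := ⟨0, Finset.mem_insert_self _ _⟩
  set c := Fc.min' hFc with hc
  set d := Fd.max' hFd with hd
  have hc0 : c ≤ 0 := Finset.min'_le _ _ (Finset.mem_insert_self _ _)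
  have hd0 : 0 ≤ d := Finset.le_max' _ _ (Finset.mem_insert_self _ _)
  have hcS : ∀ i, t₂.ge c (S i) := fun i =>
    t₂.ge_antitone (Finset.min'_le _ _ (Finset.mem_insert_of_mem
      (Finset.mem_image_of_mem ca (Finset.mem_univ i)))) _ (hca i)
  have hdS : ∀ i, t₂.le d (S i) := fun i =>
    t₂.le_monotone (Finset.le_max' _ _ (Finset.mem_insert_of_mem
      (Finset.mem_image_of_mem cb (Finset.mem_univ i)))) _ (hcb i)
  have heartGE : ∀ y, InHeart t₁ y → t₂.ge c y := fun y hy =>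
    extClosure_ge t₂ c (fun z hz => by obtain ⟨i, rfl⟩ := hz; exact hcS i) (hlength y hy)
  have heartLE : ∀ y, InHeart t₁ y → t₂.le d y := fun y hy =>
    extClosure_le t₂ d (fun z hz => by obtain ⟨i, rfl⟩ := hz; exact hdS i) (hlength y hy)
  have keyLE : ∀ k : ℕ, ∀ b : ℤ, b ≤ -c + k → ∀ x, InHeart t₂ x → t₁.le b x →
      t₁.le (-c) x := by
    intro k
    induction k with
    | zero =>
      intro b hb x hx hbx
      exact t₁.le_monotone (by simpa using hb) _ hbx
    | succ k ih =>
      intro b hb x hx hbx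
      by_cases hble : b ≤ -c + k
      · exact ih b hble x hx hbx
      · have hbc : -c < b := by omega
        obtain ⟨G, hL, hG, f, g, w, mem⟩ := truncLE_spec t₁ (b-1) x
        have hL1 : t₁.le b ((truncLEObj t₁ (b-1) x)⟦(1:ℤ)⟧) :=
          t₁.le_monotone (by omega) _ (t₁.le_shift (b-1) 1 (b-2) (by omega) _ hL)
        have hGLE : t₁.le b G := le_ext₂ t₁ (rot_of_distTriang _ mem) b hbx hL1
        have hGheart : InHeart t₁ (G⟦b⟧) :=
          ⟨t₁.le_shift b b 0 (by omega) _ hGLE, t₁.ge_shift (b-1+1) b 0 (by omega) _ hG⟩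
        have hG2 : t₂.ge (c+b) G := by
          have h1 : t₂.ge c (G⟦b⟧) := heartGE _ hGheart
          have h2 : t₂.ge (c+b) ((G⟦b⟧)⟦(-b : ℤ)⟧) :=
            t₂.ge_shift c (-b) (c+b) (by omega) _ h1
          exact ObjectProperty.prop_of_iso (t₂.ge (c+b)) (((shiftEquiv C b).unitIso.app G).symm) h2
        have hgz : g = 0 := zeroHom t₂ (show (0:ℤ) < c + b by omega) g hx.1 hG2
        have hGzero : IsZero G := isZero₃' mem hgz
          (fun φ => zeroHom t₁ (show b - 2 < b - 1 + 1 by omega) φ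
            (t₁.le_shift (b-1) 1 (b-2) (by omega) _ hL) hG)
        have : IsIso f := (Triangle.isZero₃_iff_isIso₁ _ mem).1 hGzero
        have hxle : t₁.le (b-1) x := ObjectProperty.prop_of_iso (t₁.le (b-1)) (asIso f) hL
        exact ih (b-1) (by omega) x hx hxle
  have keyGE : ∀ k : ℕ, ∀ a : ℤ, -d - k ≤ a → ∀ x, InHeart t₂ x → t₁.ge a x →
      t₁.ge (-d) x := by
    intro k
    induction k with
    | zero =>
      intro a ha x hx hax
      exact t₁.ge_antitone (by simpa using ha) _ hax
    | succ k ih =>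
      intro a ha x hx hax
      by_cases h' : -d - k ≤ a
      · exact ih a h' x hx hax
      · have had : a < -d := by omega
        obtain ⟨L, hL, hG, f, g, w, mem⟩ := truncGE_spec t₁ (a+1) x
        have hG' : t₁.ge a ((truncGEObj t₁ (a+1) x)⟦(-1 : ℤ)⟧) :=
          t₁.ge_antitone (show a ≤ a + 2 by omega) _
            (t₁.ge_shift (a+1) (-1) (a+2) (by omega) _ hG)
        have hLge : t₁.ge a L := ge_ext₂ t₁ (inv_rot_of_distTriang _ mem) a hG' hax
        have hLle : t₁.le a L := t₁.le_monotone (show a+1-1 ≤ a by omega) _ hL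
        have hLheart : InHeart t₁ (L⟦a⟧) :=
          ⟨t₁.le_shift a a 0 (by omega) _ hLle, t₁.ge_shift a a 0 (by omega) _ hLge⟩
        have hL2 : t₂.le (d+a) L := by
          have h1 : t₂.le d (L⟦a⟧) := heartLE _ hLheart
          have h2 : t₂.le (d+a) ((L⟦a⟧)⟦(-a : ℤ)⟧) :=
            t₂.le_shift d (-a) (d+a) (by omega) _ h1
          exact ObjectProperty.prop_of_iso (t₂.le (d+a)) (((shiftEquiv C a).unitIso.app L).symm) h2
        have hfz : f = 0 := zeroHom t₂ (show d + a < 0 by omega) f hL2 hx.2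
        have hLzero : IsZero L := isZero₁' mem hfz
          (fun φ => zeroHom t₁ (show a + 1 - 1 - 1 < a + 1 by omega) φ
            (t₁.le_shift (a+1-1) 1 (a+1-1-1) (by omega) _ hL) hG)
        have : IsIso g := (Triangle.isZero₁_iff_isIso₂ _ mem).1 hLzero
        have hxge : t₁.ge (a+1) x := ObjectProperty.prop_of_iso (t₁.ge (a+1)) (asIso g).symm hG
        exact ih (a+1) (by omega) x hx hxge
  refine ⟨-d, -c, by omega, ?_⟩
  intro x hx
  obtain ⟨a0, b0, hga, hlb⟩ := ht₁ x
  have h1 : t₁.ge (-d) x := keyGE (-d - a0).toNat a0 (by omega) x hx hga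
  have h2 : t₁.le (-c) x := keyLE (b0 + c).toNat b0 (by omega) x hx hlb
  exact memIcc_of_ge_le t₁ h1 h2

end TSt
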